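/- For n odd, the Cartesian product K₂ □ Kₙ satisfies: its unique structure forces χ_os(K₂ □ Kₙ) = 2n. In particular, for odd n, every odd-dominating set D of K₂ □ Kₙ yields χ((K₂□Kₙ)[D]) + χ((K₂□Kₙ)[V∖D]) ≥ 2n. -/

import Mathlib

open SimpleGraph Finset
open scoped Classical

/-- The closed neighborhood `N[v]` of a vertex `v`. -/
def closedNbhd {V : Type*} (G : SimpleGraph V) (v : V) : Set V :=
  insert v (G.neighborSet v)

/-- `D` is an odd-dominating set: `|N[v] ∩ D|` is odd for every vertex `v`. -/
def OddDomSet {V : Type*} (G : SimpleGraph V) (D : Set V) : Prop :=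
  ∀ v, Odd ((closedNbhd G v ∩ D).ncard)

/-- `f` is an odd-sum coloring: a proper coloring with positive integer colors
such that the sum of colors over each closed neighborhood is odd. -/
def IsOddSumColoring {V : Type*} [Fintype V] (G : SimpleGraph V) (f : V → ℕ) : Prop :=
  (∀ v, 0 < f v) ∧ (∀ ⦃a b⦄, G.Adj a b → f a ≠ f b) ∧
  (∀ v, Odd (∑ w ∈ (closedNbhd G v).toFinset, f w))

/-- The odd-sum chromatic number: minimum number of colors used in an odd-sum coloring. -/
noncomputable def chiOS {V : Type*} [Fintype V] (G : SimpleGraph V) : ℕ :=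
  sInf {n | ∃ f : V → ℕ, IsOddSumColoring G f ∧ (Finset.univ.image f).card = n}

abbrev BG (n : ℕ) : SimpleGraph (Fin 2 × Fin n) :=
  completeGraph (Fin 2) □ completeGraph (Fin n)

lemma fin2_add_one_ne : ∀ i : Fin 2, i + 1 ≠ i := by decide
lemma fin2_ne_iff (x i : Fin 2) : x ≠ i ↔ x = i + 1 := by revert x i; decide
lemma fin2_add_one_add_one (i : Fin 2) : i + 1 + 1 = i := by revert i; decide

lemma mem_closedNbhd {n : ℕ} (i : Fin 2) (j : Fin n) (p : Fin 2 × Fin n) :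
    p ∈ closedNbhd (BG n) (i, j) ↔ p.1 = i ∨ p.2 = j := by
  obtain ⟨x, y⟩ := p
  simp only [closedNbhd, Set.mem_insert_iff, mem_neighborSet, boxProd_adj,
    completeGraph_eq_top, top_adj, Prod.mk.injEq]
  by_cases hx : x = i <;> by_cases hy : y = j <;> simp_all <;> tauto

lemma closedNbhd_toFinset {n : ℕ} (i : Fin 2) (j : Fin n) :
    (closedNbhd (BG n) (i, j)).toFinset =
      insert (i + 1, j) (Finset.univ.image fun b : Fin n => (i, b)) := by
  ext ⟨x, y⟩
  simp only [Set.mem_toFinset, mem_closedNbhd, Finset.mem_insert, Finset.mem_image,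
    Finset.mem_univ, true_and, Prod.mk.injEq]
  constructor
  · rintro (h | h)
    · exact Or.inr ⟨y, h.symm, rfl⟩
    · by_cases hx : x = i
      · exact Or.inr ⟨y, hx.symm, rfl⟩
      · exact Or.inl ⟨(fin2_ne_iff x i).mp hx, h⟩
  · rintro (⟨h1, h2⟩ | ⟨b, h1, h2⟩)
    · exact Or.inr h2
    · exact Or.inl h1.symm

lemma sum_closedNbhd {n : ℕ} (f : Fin 2 × Fin n → ℕ) (i : Fin 2) (j : Fin n) :
    ∑ w ∈ (closedNbhd (BG n) (i, j)).toFinset, f w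
      = f (i + 1, j) + ∑ b : Fin n, f (i, b) := by
  rw [closedNbhd_toFinset, Finset.sum_insert, Finset.sum_image]
  · intro a _ b _ h; simpa using h
  · simp only [Finset.mem_image, Finset.mem_univ, true_and, Prod.mk.injEq, not_exists]
    rintro b ⟨h, -⟩; exact fin2_add_one_ne i h.symm

section Part1
variable {n : ℕ}

/-- any odd-sum coloring has rows of constant parity -/
lemma row_parity (f : Fin 2 × Fin n → ℕ) (hf : IsOddSumColoring (BG n) f)
    (i : Fin 2) (j j' : Fin n) : f (i, j) % 2 = f (i, j') % 2 := by
  have h1 := hf.2.2 (i + 1, j)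
  have h2 := hf.2.2 (i + 1, j')
  rw [sum_closedNbhd, fin2_add_one_add_one, Nat.odd_iff] at h1 h2
  omega

lemma rows_parity_ne (hn : Odd n) (f : Fin 2 × Fin n → ℕ)
    (hf : IsOddSumColoring (BG n) f) (j j' : Fin n) :
    f (0, j) % 2 ≠ f (1, j') % 2 := by
  haveI : NeZero n := ⟨by rintro rfl; simp [Nat.odd_iff] at hn⟩
  have key : ∀ i : Fin 2, f (i + 1, (0 : Fin n)) % 2 ≠ f (i, (0 : Fin n)) % 2 := by
    intro i
    have h1 := hf.2.2 (i, (0 : Fin n))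
    rw [sum_closedNbhd, Nat.odd_iff] at h1
    have hsum : (∑ b : Fin n, f (i, b)) % 2 = (n * (f (i, (0 : Fin n)) % 2)) % 2 := by
      rw [Finset.sum_nat_mod]
      have : ∀ b : Fin n, f (i, b) % 2 = f (i, (0 : Fin n)) % 2 :=
        fun b => row_parity f hf i b 0
      rw [Finset.sum_congr rfl fun b _ => this b, Finset.sum_const, card_univ,
        Fintype.card_fin, smul_eq_mul]
    obtain ⟨k, hk⟩ := hn
    rcases Nat.mod_two_eq_zero_or_one (f (i, (0 : Fin n))) with h | h <;>
      rw [h] at hsum <;> simp at hsum <;> omega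
  have k0 := key 0
  have := row_parity f hf 0 j 0
  have := row_parity f hf 1 j' 0
  simp only [show (0 : Fin 2) + 1 = 1 by decide] at k0
  omega

lemma coloring_card (hn : Odd n) (f : Fin 2 × Fin n → ℕ)
    (hf : IsOddSumColoring (BG n) f) : (Finset.univ.image f).card = 2 * n := by
  have hinj : ∀ i : Fin 2, Function.Injective (fun b : Fin n => f (i, b)) := by
    intro i a b h
    by_contra hab
    exact hf.2.1 (boxProd_adj_right.mpr (by simpa using hab)) h
  have himg : Finset.univ.image f =
      (Finset.univ.image fun b : Fin n => f (0, b)) ∪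
      (Finset.univ.image fun b : Fin n => f (1, b)) := by
    ext x
    simp only [Finset.mem_image, Finset.mem_union, Finset.mem_univ, true_and]
    constructor
    · rintro ⟨⟨i, b⟩, rfl⟩
      fin_cases i
      · exact Or.inl ⟨b, rfl⟩
      · exact Or.inr ⟨b, rfl⟩
    · rintro (⟨b, rfl⟩ | ⟨b, rfl⟩)
      · exact ⟨(0, b), rfl⟩
      · exact ⟨(1, b), rfl⟩
  have hdisj : Disjoint (Finset.univ.image fun b : Fin n => f (0, b))
      (Finset.univ.image fun b : Fin n => f (1, b)) := by
    rw [Finset.disjoint_left]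
    rintro x hx hx'
    simp only [Finset.mem_image, Finset.mem_univ, true_and] at hx hx'
    obtain ⟨b, rfl⟩ := hx
    obtain ⟨b', hb'⟩ := hx'
    exact rows_parity_ne hn f hf b b' (by rw [hb'])
  rw [himg, Finset.card_union_of_disjoint hdisj,
    Finset.card_image_of_injective _ (hinj 0), Finset.card_image_of_injective _ (hinj 1)]
  simp [two_mul]

lemma explicit_coloring (hn : Odd n) :
    IsOddSumColoring (BG n) (fun p : Fin 2 × Fin n => 2 * p.2.val + 1 + p.1.val) := by
  refine ⟨fun v => by positivity, ?_, ?_⟩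
  · intro a b hab h
    have h' : 2 * (a.2 : ℕ) + 1 + (a.1 : ℕ) = 2 * (b.2 : ℕ) + 1 + (b.1 : ℕ) := h
    rcases boxProd_adj.mp hab with ⟨h1, h2⟩ | ⟨h1, h2⟩
    · refine h1 (Fin.ext ?_)
      have h2' : (a.2 : ℕ) = (b.2 : ℕ) := congrArg Fin.val h2
      have := a.1.isLt; have := b.1.isLt
      omega
    · refine h1 (Fin.ext ?_)
      have h2' : (a.1 : ℕ) = (b.1 : ℕ) := congrArg Fin.val h2
      omega
  · rintro ⟨i, j⟩
    rw [sum_closedNbhd]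
    have hsum : (∑ b : Fin n, (2 * b.val + 1 + i.val))
        = 2 * (∑ b : Fin n, b.val) + n * (1 + i.val) := by
      rw [Finset.sum_add_distrib, Finset.sum_add_distrib, ← Finset.mul_sum,
        Finset.sum_const, Finset.sum_const, card_univ, Fintype.card_fin]
      ring
    simp only [hsum, Nat.odd_iff]
    obtain ⟨k, hk⟩ := hn
    fin_cases i <;> simp <;> omega

lemma chiOS_eq (hn : Odd n) : chiOS (BG n) = 2 * n := by
  have hset : {m | ∃ f : Fin 2 × Fin n → ℕ,
      IsOddSumColoring (BG n) f ∧ (Finset.univ.image f).card = m} = {2 * n} := by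
    ext m
    simp only [Set.mem_setOf_eq, Set.mem_singleton_iff]
    constructor
    · rintro ⟨f, hf, rfl⟩
      exact coloring_card hn f hf
    · rintro rfl
      exact ⟨_, explicit_coloring hn, coloring_card hn _ (explicit_coloring hn)⟩
  rw [chiOS, hset, csInf_singleton]

end Part1

section Part2
variable {n : ℕ}

lemma fin2_eq_zero_or_one : ∀ x : Fin 2, x = 0 ∨ x = 1 := by decide

lemma closedNbhd_eq_union (i : Fin 2) (j : Fin n) :
    closedNbhd (BG n) (i, j) = {p : Fin 2 × Fin n | p.1 = i} ∪ ({(i + 1, j)} : Set _) := by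
  ext ⟨x, y⟩
  simp only [mem_closedNbhd, Set.mem_union, Set.mem_setOf_eq, Set.mem_singleton_iff,
    Prod.mk.injEq]
  by_cases hx : x = i
  · simp [hx]
  · have hx1 : x = i + 1 := (fin2_ne_iff x i).mp hx
    simp [hx, hx1, fin2_add_one_ne i]

lemma ncard_inter (D : Set (Fin 2 × Fin n)) (i : Fin 2) (j : Fin n) :
    (closedNbhd (BG n) (i, j) ∩ D).ncard
      = ({p : Fin 2 × Fin n | p.1 = i} ∩ D).ncard + (if (i + 1, j) ∈ D then 1 else 0) := by
  have hdisj : Disjoint ({p : Fin 2 × Fin n | p.1 = i} ∩ D)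
      (({(i + 1, j)} : Set (Fin 2 × Fin n)) ∩ D) := by
    rw [Set.disjoint_left]
    rintro p ⟨hp, -⟩ ⟨hq, -⟩
    rw [Set.mem_singleton_iff] at hq
    subst hq
    exact fin2_add_one_ne i hp
  rw [closedNbhd_eq_union, Set.union_inter_distrib_right,
    Set.ncard_union_eq hdisj (Set.toFinite _) (Set.toFinite _)]
  congr 1
  by_cases h : (i + 1, j) ∈ D
  · rw [if_pos h, Set.inter_eq_self_of_subset_left (Set.singleton_subset_iff.mpr h),
      Set.ncard_singleton]
  · rw [if_neg h, Set.singleton_inter_eq_empty.mpr h, Set.ncard_empty]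

lemma ncard_row (i : Fin 2) : ({p : Fin 2 × Fin n | p.1 = i}).ncard = n := by
  have himg : {p : Fin 2 × Fin n | p.1 = i} = (fun b : Fin n => (i, b)) '' Set.univ := by
    ext ⟨x, y⟩
    simp only [Set.mem_setOf_eq, Set.image_univ, Set.mem_range, Prod.mk.injEq]
    constructor
    · rintro rfl; exact ⟨y, rfl, rfl⟩
    · rintro ⟨b, rfl, rfl⟩; rfl
  rw [himg, Set.ncard_image_of_injective _ (fun a b h => by simpa using h),
    Set.ncard_univ, Nat.card_eq_fintype_card, Fintype.card_fin]

lemma oddDom_row (hn : Odd n) (D : Set (Fin 2 × Fin n)) (hD : OddDomSet (BG n) D) :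
    D = {p : Fin 2 × Fin n | p.1 = 0} ∨ D = {p : Fin 2 × Fin n | p.1 = 1} := by
  haveI : NeZero n := ⟨by rintro rfl; simp [Nat.odd_iff] at hn⟩
  have hconst : ∀ (i : Fin 2) (j j' : Fin n), ((i, j) ∈ D ↔ (i, j') ∈ D) := by
    intro i j j'
    have h1 := hD (i + 1, j)
    have h2 := hD (i + 1, j')
    rw [ncard_inter, fin2_add_one_add_one, Nat.odd_iff] at h1 h2
    by_cases ha : (i, j) ∈ D <;> by_cases hb : (i, j') ∈ D <;>
      simp only [ha, hb, if_true, if_false, iff_true, iff_false] at h1 h2 ⊢ <;>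
      first | trivial | tauto | omega
  have hrow : ∀ i : Fin 2, ({p : Fin 2 × Fin n | p.1 = i} ∩ D).ncard
      = if (i, (0 : Fin n)) ∈ D then n else 0 := by
    intro i
    by_cases h : (i, (0 : Fin n)) ∈ D
    · rw [if_pos h]
      have hEq : {p : Fin 2 × Fin n | p.1 = i} ∩ D = {p : Fin 2 × Fin n | p.1 = i} := by
        rw [Set.inter_eq_left]
        rintro ⟨x, y⟩ hx
        rw [Set.mem_setOf_eq] at hx
        subst hx
        exact (hconst x y 0).mpr h
      rw [hEq, ncard_row]
    · rw [if_neg h]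
      have hEq : {p : Fin 2 × Fin n | p.1 = i} ∩ D = ∅ := by
        ext ⟨x, y⟩
        simp only [Set.mem_inter_iff, Set.mem_setOf_eq, Set.mem_empty_iff_false, iff_false,
          not_and]
        rintro rfl hmem
        exact h ((hconst x y 0).mp hmem)
      rw [hEq, Set.ncard_empty]
  have hn2 := hn
  rw [Nat.odd_iff] at hn2
  by_cases h0 : ((0 : Fin 2), (0 : Fin n)) ∈ D
  · left
    have h1 := hD ((0 : Fin 2), (0 : Fin n))
    rw [ncard_inter, hrow, if_pos h0, Nat.odd_iff] at h1
    have h10 : ((0 : Fin 2) + 1, (0 : Fin n)) ∉ D := by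
      intro hmem
      rw [if_pos hmem] at h1
      omega
    ext ⟨x, y⟩
    simp only [Set.mem_setOf_eq]
    constructor
    · intro hxy
      by_contra hx
      have hx1 : x = 0 + 1 := (fin2_ne_iff x 0).mp hx
      subst hx1
      exact h10 ((hconst (0 + 1) y 0).mp hxy)
    · rintro rfl
      exact (hconst 0 y 0).mpr h0
  · right
    have h1 := hD ((0 : Fin 2), (0 : Fin n))
    rw [ncard_inter, hrow, if_neg h0, Nat.odd_iff] at h1
    have h10 : ((0 : Fin 2) + 1, (0 : Fin n)) ∈ D := by
      by_contra hmem
      rw [if_neg hmem] at h1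
      omega
    have h01 : (0 : Fin 2) + 1 = 1 := by decide
    rw [h01] at h10
    ext ⟨x, y⟩
    simp only [Set.mem_setOf_eq]
    constructor
    · intro hxy
      by_contra hx
      rcases fin2_eq_zero_or_one x with rfl | rfl
      · exact h0 ((hconst 0 y 0).mp hxy)
      · exact hx rfl
    · rintro rfl
      exact (hconst 1 y 0).mpr h10

lemma n_le_chrom (i : Fin 2) :
    (n : ℕ∞) ≤ ((BG n).induce {p : Fin 2 × Fin n | p.1 = i}).chromaticNumber := by
  have emb : (⊤ : SimpleGraph (Fin n)) ↪g ((BG n).induce {p : Fin 2 × Fin n | p.1 = i}) :=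
    ⟨⟨fun b => ⟨(i, b), rfl⟩, fun a b h => by
        simpa [Subtype.ext_iff, Prod.ext_iff] using h⟩, by
      intro a b
      show (BG n).Adj (i, a) (i, b) ↔ _
      rw [boxProd_adj_right]⟩
  have h := chromaticNumber_mono_of_hom emb.toHom
  rwa [chromaticNumber_top, Fintype.card_fin] at h

end Part2

theorem chiOS_boxProd_K2_Kn (n : ℕ) (hn : Odd n) :
    chiOS (completeGraph (Fin 2) □ completeGraph (Fin n)) = 2 * n ∧
    ∀ D : Set (Fin 2 × Fin n),
      OddDomSet (completeGraph (Fin 2) □ completeGraph (Fin n)) D →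
      (2 * n : ℕ∞) ≤
        ((completeGraph (Fin 2) □ completeGraph (Fin n)).induce D).chromaticNumber +
        ((completeGraph (Fin 2) □ completeGraph (Fin n)).induce Dᶜ).chromaticNumber := by
  constructor
  · exact chiOS_eq hn
  · intro D hD
    have hcompl : ∀ i : Fin 2, ({p : Fin 2 × Fin n | p.1 = i})ᶜ
        = {p : Fin 2 × Fin n | p.1 = i + 1} := by
      intro i
      ext p
      simp only [Set.mem_compl_iff, Set.mem_setOf_eq]
      exact fin2_ne_iff _ _
    have h2n : (2 * n : ℕ∞) = (n : ℕ∞) + (n : ℕ∞) := two_mul _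
    rcases oddDom_row hn D hD with rfl | rfl
    · rw [hcompl 0, h2n]
      exact add_le_add (n_le_chrom 0) (n_le_chrom (0 + 1))
    · rw [hcompl 1, h2n]
      exact add_le_add (n_le_chrom 1) (n_le_chrom (1 + 1))
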